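/- arXiv:1710.00021 — 3 statements merged into one kernel-verified Lean document; each statement's English description precedes it below -/
import Mathlib

section
/- For every real number x > 0, arsinh(1/sinh x) > 2 e^{-x}, and consequently arsinh(1/sinh x)^2 > 4 e^{-2x}. -/
open Real

lemma auxA (t : ℝ) (ht : 0 < t) : Real.exp (2*t) * (1 - t) < 1 + t := by
  set f : ℝ → ℝ := fun t => 1 + t - Real.exp (2*t) * (1-t) with hf
  have hd : ∀ t : ℝ, HasDerivAt f (1 - Real.exp (2*t) * (1 - 2*t)) t := by
    intro t
    have h1 : HasDerivAt (fun t : ℝ => 2*t) 2 t := by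
      simpa using (hasDerivAt_id t).const_mul (2:ℝ)
    have h2 : HasDerivAt (fun t : ℝ => Real.exp (2*t)) (Real.exp (2*t) * 2) t :=
      (Real.hasDerivAt_exp (2*t)).comp t h1
    have h3 : HasDerivAt (fun t : ℝ => 1 - t) (-1) t := by
      simpa using (hasDerivAt_id t).const_sub (1:ℝ)
    have h4 := ((hasDerivAt_id t).const_add 1).sub (h2.mul h3)
    refine h4.congr_deriv ?_
    ring
  have hmono : StrictMonoOn f (Set.Ici (0:ℝ)) := by
    apply strictMonoOn_of_deriv_pos (convex_Ici 0)
      (fun s _ => ((hd s).differentiableAt.continuousAt).continuousWithinAt)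
    intro s hs
    rw [interior_Ici] at hs
    rw [(hd s).deriv]
    have hne : (-(2*s)) ≠ 0 := ne_of_lt (by simp at hs; linarith)
    have := Real.add_one_lt_exp hne
    have hmul : Real.exp (2*s) * Real.exp (-(2*s)) = 1 := by
      rw [← Real.exp_add]; simp
    nlinarith [Real.exp_pos (2*s), Real.exp_pos (-(2*s))]
  have h0 : f 0 = 0 := by simp [hf]
  have := hmono (Set.self_mem_Ici) (Set.mem_Ici.2 ht.le) ht
  rw [h0] at this
  simp only [hf] at this
  linarith

theorem stmt_2 (x : ℝ) (hx : 0 < x) :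
    2 * Real.exp (-x) < Real.arsinh (1 / Real.sinh x) ∧
      4 * Real.exp (-2 * x) < (Real.arsinh (1 / Real.sinh x)) ^ 2 := by
  set t := Real.exp (-x) with htdef
  have ht0 : 0 < t := Real.exp_pos _
  have ht1 : t < 1 := by rw [htdef]; exact Real.exp_lt_one_iff.2 (by linarith)
  have hsinh : 0 < Real.sinh x := Real.sinh_pos_iff.2 hx
  have hsqrt : Real.sqrt (1 + (1 / Real.sinh x)^2) = Real.cosh x / Real.sinh x := by
    rw [show 1 + (1 / Real.sinh x)^2 = (Real.cosh x / Real.sinh x)^2 by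
      field_simp
      nlinarith [Real.cosh_sq x]]
    exact Real.sqrt_sq (by positivity)
  have hid : Real.arsinh (1 / Real.sinh x) = Real.log ((1+t)/(1-t)) := by
    rw [Real.arsinh, hsqrt]
    congr 1
    rw [← add_div, div_eq_div_iff hsinh.ne' (by linarith : (1:ℝ) - t ≠ 0)]
    rw [Real.cosh_eq, Real.sinh_eq, htdef, Real.exp_neg]
    have hinv : Real.exp x * (Real.exp x)⁻¹ = 1 := mul_inv_cancel₀ (Real.exp_pos x).ne'
    linear_combination -hinv
  have hkey : 2 * t < Real.arsinh (1 / Real.sinh x) := by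
    rw [hid, lt_log_iff_exp_lt (div_pos (by linarith) (by linarith))]
    rw [lt_div_iff₀ (by linarith)]
    have := auxA t ht0
    nlinarith
  refine ⟨hkey, ?_⟩
  have h2 : Real.exp (-2*x) = t^2 := by
    rw [htdef, sq, ← Real.exp_add]; ring_nf
  rw [h2]
  nlinarith
end

section
/- For all real ℓ > 0, the inequality 2ℓ / (sinh(ℓ/2) · arsinh(1/sinh(ℓ/2))^2) < ℓ · e^{ℓ} / (2 · sinh(ℓ/2)) holds. -/
open Real

lemma aux_g (w : ℝ) (hw : 0 < w) :
    (1 - w) * Real.exp w < (1 + w) * Real.exp (-w) := by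
  have key : StrictMonoOn (fun x : ℝ => (1 + x) * Real.exp (-x) - (1 - x) * Real.exp x)
      (Set.Ici 0) := by
    apply strictMonoOn_of_deriv_pos (convex_Ici 0)
    · fun_prop
    · intro x hx
      rw [interior_Ici] at hx
      have h1 : HasDerivAt (fun x : ℝ => (1 + x) * Real.exp (-x) - (1 - x) * Real.exp x)
          ((1 * Real.exp (-x) + (1 + x) * (Real.exp (-x) * (-1)))
            - ((-1) * Real.exp x + (1 - x) * Real.exp x)) x := by
        exact (((hasDerivAt_id x).const_add 1).mul
          (((hasDerivAt_id x).neg).exp)).sub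
          ((((hasDerivAt_id x).neg).const_add 1).mul (Real.hasDerivAt_exp x))
      rw [h1.deriv]
      have hexp : Real.exp (-x) < Real.exp x := by
        apply Real.exp_lt_exp.2; linarith [hx.out]
      have hx0 : (0:ℝ) < x := hx.out
      nlinarith [Real.exp_pos x, Real.exp_pos (-x)]
  have h0 : (0:ℝ) ∈ Set.Ici (0:ℝ) := Set.self_mem_Ici
  have hw' : w ∈ Set.Ici (0:ℝ) := le_of_lt hw
  have := key h0 hw' hw
  simp at this
  linarith

lemma aux_log (w : ℝ) (hw0 : 0 < w) (hw1 : w < 1) :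
    2 * w < Real.log ((1 + w) / (1 - w)) := by
  have h1 : (0:ℝ) < 1 - w := by linarith
  have h2 : (0:ℝ) < 1 + w := by linarith
  have hg := aux_g w hw0
  have hexp : Real.exp (2 * w) < (1 + w) / (1 - w) := by
    rw [lt_div_iff₀ h1]
    have : Real.exp (2 * w) = Real.exp w * Real.exp w := by
      rw [← Real.exp_add]; ring_nf
    rw [this]
    have he : Real.exp w * Real.exp (-w) = 1 := by
      rw [← Real.exp_add]; simp
    nlinarith [Real.exp_pos w, Real.exp_pos (-w)]
  have hpos : (0:ℝ) < (1 + w) / (1 - w) := div_pos h2 h1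
  exact (Real.lt_log_iff_exp_lt hpos).2 hexp

lemma aux_arsinh (t : ℝ) (ht : 0 < t) :
    Real.arsinh (1 / Real.sinh t) = Real.log ((1 + Real.exp (-t)) / (1 - Real.exp (-t))) := by
  have hs : 0 < Real.sinh t := Real.sinh_pos_iff.2 ht
  have hw1 : Real.exp (-t) < 1 := by
    rw [Real.exp_lt_one_iff]; linarith
  have hw0 : 0 < Real.exp (-t) := Real.exp_pos _
  have hpos : (0:ℝ) < (1 + Real.exp (-t)) / (1 - Real.exp (-t)) :=
    div_pos (by linarith) (by linarith)
  apply Real.exp_injective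
  rw [Real.exp_arsinh, Real.exp_log hpos]
  have hsqrt : Real.sqrt (1 + (1 / Real.sinh t) ^ 2) = Real.cosh t / Real.sinh t := by
    rw [show (1 : ℝ) + (1 / Real.sinh t) ^ 2 = (Real.cosh t / Real.sinh t)^2 by
      field_simp
      nlinarith [Real.cosh_sq t]]
    exact Real.sqrt_sq (le_of_lt (div_pos (Real.cosh_pos t) hs))
  rw [hsqrt]
  rw [Real.sinh_eq, Real.cosh_eq]
  have hE : Real.exp t * Real.exp (-t) = 1 := by rw [← Real.exp_add]; simp
  have hne : Real.exp t - Real.exp (-t) ≠ 0 := by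
    have : Real.exp (-t) < Real.exp t := Real.exp_lt_exp.2 (by linarith)
    linarith
  have h1w : (1:ℝ) - Real.exp (-t) ≠ 0 := by linarith
  field_simp
  nlinarith [Real.exp_pos t, Real.exp_pos (-t), Real.exp_lt_exp.2 (show -t < t by linarith)]

theorem stmt_3 (ℓ : ℝ) (hℓ : 0 < ℓ) :
    2 * ℓ / (Real.sinh (ℓ / 2) * (Real.arsinh (1 / Real.sinh (ℓ / 2))) ^ 2) <
      ℓ * Real.exp ℓ / (2 * Real.sinh (ℓ / 2)) := by
  set t := ℓ / 2 with ht_def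
  have ht : 0 < t := by positivity
  have hs : 0 < Real.sinh t := Real.sinh_pos_iff.2 ht
  set a := Real.arsinh (1 / Real.sinh t) with ha_def
  set w := Real.exp (-t) with hw_def
  have hw0 : 0 < w := Real.exp_pos _
  have hw1 : w < 1 := by rw [hw_def, Real.exp_lt_one_iff]; linarith
  have hkey : 2 * w < a := by
    rw [ha_def, aux_arsinh t ht]
    exact aux_log w hw0 hw1
  have ha0 : 0 < a := lt_trans (by positivity) hkey
  have hww : w * w = Real.exp (-ℓ) := by
    rw [hw_def, ← Real.exp_add]; ring_nf
    congr 1; rw [ht_def]; ring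
  have hEe : Real.exp ℓ * Real.exp (-ℓ) = 1 := by rw [← Real.exp_add]; simp
  have hmain : 4 < Real.exp ℓ * a ^ 2 := by
    have ha2 : 4 * (w * w) < a ^ 2 := by nlinarith
    rw [hww] at ha2
    nlinarith [Real.exp_pos ℓ, Real.exp_pos (-ℓ)]
  rw [div_lt_div_iff₀ (by positivity) (by positivity)]
  have ha2 : (0:ℝ) < a ^ 2 := by positivity
  nlinarith [mul_pos hs (mul_pos hℓ ha2)]
end

section
/- The function f(x) = x·e^x / sinh(x/2) is strictly monotonically increasing on (0, ∞). -/
open Real Set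

lemma aux_sinh_cosh : ∀ t : ℝ, 0 < t → t * Real.cosh t < (1 + 2*t) * Real.sinh t := by
  intro t ht
  rw [Real.sinh_eq, Real.cosh_eq]
  have ha : 0 < Real.exp t := Real.exp_pos t
  have hb : 0 < Real.exp (-t) := Real.exp_pos (-t)
  have hab : Real.exp t * Real.exp (-t) = 1 := by
    rw [← Real.exp_add]; simp
  have ha2 : 1 + 2*t < Real.exp t ^ 2 := by
    have := Real.add_one_lt_exp (by linarith : (2*t : ℝ) ≠ 0)
    calc 1 + 2*t = 2*t + 1 := by ring
    _ < Real.exp (2*t) := this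
    _ = Real.exp t ^ 2 := by rw [two_mul, Real.exp_add, sq]
  nlinarith [sq_nonneg (Real.exp t - Real.exp (-t)), mul_pos ha hb]

theorem stmt_7 :
    StrictMonoOn (fun x : ℝ => x * Real.exp x / Real.sinh (x / 2))
      (Set.Ioi (0 : ℝ)) := by
  have hs : ∀ x : ℝ, x ∈ Ioi (0:ℝ) → Real.sinh (x/2) ≠ 0 := fun x hx =>
    ne_of_gt (Real.sinh_pos_iff.2 (by linarith [mem_Ioi.mp hx]))
  have key : ∀ x ∈ Ioi (0:ℝ), HasDerivAt (fun x : ℝ => x * Real.exp x / Real.sinh (x / 2))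
      (((1 * Real.exp x + x * Real.exp x) * Real.sinh (x/2)
        - x * Real.exp x * (Real.cosh (x/2) * (1/2))) / Real.sinh (x/2)^2) x := by
    intro x hx
    have h1 : HasDerivAt (fun x : ℝ => x * Real.exp x) (1 * Real.exp x + x * Real.exp x) x :=
      (hasDerivAt_id x).mul (Real.hasDerivAt_exp x)
    have h2 : HasDerivAt (fun x : ℝ => Real.sinh (x/2)) (Real.cosh (x/2) * (1/2)) x := by
      have := (Real.hasDerivAt_sinh (x/2)).comp x ((hasDerivAt_id x).div_const 2)
      simpa [Function.comp_def] using this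
    exact h1.div h2 (hs x hx)
  apply strictMonoOn_of_deriv_pos (convex_Ioi 0)
  · exact fun x hx => (key x hx).continuousAt.continuousWithinAt
  · intro x hx
    rw [interior_Ioi] at hx
    rw [(key x hx).deriv]
    have hx0 : 0 < x := hx
    have hsinh : 0 < Real.sinh (x/2) := Real.sinh_pos_iff.2 (by linarith)
    have haux := aux_sinh_cosh (x/2) (by linarith)
    have hnum : 0 < (1 * Real.exp x + x * Real.exp x) * Real.sinh (x/2)
        - x * Real.exp x * (Real.cosh (x/2) * (1/2)) := by
      have hex : 0 < Real.exp x := Real.exp_pos x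
      nlinarith [mul_pos hex hsinh]
    exact div_pos hnum (by positivity)
end
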